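/- Let b = -1 and let g(∂,λ) ∈ C[∂,λ] satisfy -(∂ + μ + γ + 2λ)(-∂ - 2(μ+γ))·g(-μ-γ, μ) = (μ - γ)(∂ + 2(μ+γ))·g(∂ + μ + γ, λ) as an identity in C[∂, λ, μ, γ]. Then there exists a constant c ∈ C such that g(∂,λ) = c(∂ + 2λ). -/
import Mathlib


open MvPolynomial

local notation "pd" => (X 0 : MvPolynomial (Fin 4) ℂ)
local notation "pl" => (X 1 : MvPolynomial (Fin 4) ℂ)
local notation "pm" => (X 2 : MvPolynomial (Fin 4) ℂ)
local notation "pg" => (X 3 : MvPolynomial (Fin 4) ℂ)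

/-- the case `b = -1`: if `g ∈ ℂ[∂,λ]` satisfies
`-(∂+μ+γ+2λ)(-∂-2(μ+γ))·g(-μ-γ,μ) = (μ-γ)(∂+2(μ+γ))·g(∂+μ+γ,λ)` in `ℂ[∂,λ,μ,γ]`,
then `g = c(∂+2λ)` for some constant `c ∈ ℂ`. -/
theorem stmt11 (g : MvPolynomial (Fin 2) ℂ)
    (h : -((pd + pm + pg + 2 * pl) * (-pd - 2 * (pm + pg))) * aeval ![-pm - pg, pm] g
        = (pm - pg) * (pd + 2 * (pm + pg)) * aeval ![pd + pm + pg, pl] g) :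
    ∃ c : ℂ, g = C c * (X 0 + 2 * X 1) := by
  -- substitution ∂ ↦ ∂ - 1, λ ↦ λ, μ ↦ 1, γ ↦ 0
  let σ : MvPolynomial (Fin 4) ℂ →ₐ[ℂ] MvPolynomial (Fin 4) ℂ := aeval ![X 0 - 1, X 1, 1, 0]
  have e1 : σ (aeval ![-pm - pg, pm] g) = aeval ![(-1 : MvPolynomial (Fin 4) ℂ), 1] g := by
    rw [comp_aeval_apply,
      show (fun i => σ (![-pm - pg, pm] i)) = ![(-1 : MvPolynomial (Fin 4) ℂ), 1] by
        funext i; fin_cases i <;> simp [σ]]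
  have e2 : σ (aeval ![pd + pm + pg, pl] g) = aeval ![pd, pl] g := by
    rw [comp_aeval_apply,
      show (fun i => σ (![pd + pm + pg, pl] i)) = ![pd, pl] by
        funext i; fin_cases i <;> simp [σ]]
  have h2 := congrArg σ h
  simp only [map_mul, map_neg, map_sub, map_add, map_ofNat, e1, e2] at h2
  simp only [σ, aeval_X, Matrix.cons_val_zero, Matrix.cons_val_one, Matrix.head_cons,
    Matrix.cons_val_two, Matrix.cons_val_three, Matrix.tail_cons] at h2
  have hne : (pd + 1 : MvPolynomial (Fin 4) ℂ) ≠ 0 := by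
    intro hc
    have := congrArg (eval (fun _ => (0 : ℂ))) hc
    simp at this
  have key : aeval ![pd, pl] g = aeval ![(-1 : MvPolynomial (Fin 4) ℂ), 1] g * (pd + 2 * pl) := by
    apply mul_left_cancel₀ hne
    linear_combination -h2
  -- project back to ℂ[∂, λ]
  let τ : MvPolynomial (Fin 4) ℂ →ₐ[ℂ] MvPolynomial (Fin 2) ℂ := aeval ![X 0, X 1, 0, 0]
  have h3 := congrArg τ key
  have f1 : τ (aeval ![pd, pl] g) = g := by
    rw [comp_aeval_apply,
      show (fun i => τ (![pd, pl] i)) = (X : Fin 2 → MvPolynomial (Fin 2) ℂ) by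
        funext i; fin_cases i <;> simp [τ],
      aeval_X_left_apply]
  have f2 : τ (aeval ![(-1 : MvPolynomial (Fin 4) ℂ), 1] g) = aeval ![(-1 : MvPolynomial (Fin 2) ℂ), 1] g := by
    rw [comp_aeval_apply,
      show (fun i => τ (![(-1 : MvPolynomial (Fin 4) ℂ), 1] i)) = ![(-1 : MvPolynomial (Fin 2) ℂ), 1] by
        funext i; fin_cases i <;> simp [τ]]
  simp only [map_mul, map_add, map_ofNat, f1, f2] at h3
  simp only [τ, aeval_X, Matrix.cons_val_zero, Matrix.cons_val_one, Matrix.head_cons] at h3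
  have f3 : aeval ![(-1 : MvPolynomial (Fin 2) ℂ), 1] g = C (aeval ![(-1 : ℂ), 1] g) := by
    have h4 := comp_aeval_apply (f := ![(-1 : ℂ), 1]) (Algebra.ofId ℂ (MvPolynomial (Fin 2) ℂ)) g
    rw [show (fun i => Algebra.ofId ℂ (MvPolynomial (Fin 2) ℂ) (![(-1 : ℂ), 1] i))
          = ![(-1 : MvPolynomial (Fin 2) ℂ), 1] by
        funext i; fin_cases i <;> simp [Algebra.ofId_apply]] at h4
    rw [← h4, Algebra.ofId_apply, algebraMap_eq]
  rw [f3] at h3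
  exact ⟨aeval ![(-1 : ℂ), 1] g, h3⟩
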